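/- Let R = k[[x,y,z]] over a field k and I_n = (z^{n^4} - z^n x^n, y^n - z^n x, x^{n+1} - x z^{n^4-n} + y z^n) for a fixed n ≥ 1. Then x z^{3n} ∈ I_n. -/
import Mathlib


open MvPowerSeries in
/-- `x z^{3n} ∈ Iₙ`. -/
theorem stmt_2 {k : Type*} [Field k] (n : ℕ) (hn : 1 ≤ n)
    (x y z : MvPowerSeries (Fin 3) k)
    (hx : x = X 0) (hy : y = X 1) (hz : z = X 2)
    (I : Ideal (MvPowerSeries (Fin 3) k))
    (hI : I = Ideal.span {z ^ (n ^ 4) - z ^ n * x ^ n, y ^ n - z ^ n * x,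
      x ^ (n + 1) - x * z ^ (n ^ 4 - n) + y * z ^ n}) :
    x * z ^ (3 * n) ∈ I := by
  subst hx hy hz hI
  obtain ⟨m, rfl⟩ := Nat.exists_eq_add_of_le hn
  set s : ℕ := (1 + m) ^ 4 - (1 + m) with hs_def
  have hle : 1 + m ≤ (1 + m) ^ 4 := Nat.le_self_pow (by norm_num) _
  have hs : (1 + m) ^ 4 = (1 + m) + s := (Nat.add_sub_cancel' hle).symm
  have g1 : (X 2 ^ ((1+m) ^ 4) - X 2 ^ (1+m) * X 0 ^ (1+m) : MvPowerSeries (Fin 3) k) ∈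
      Ideal.span {X 2 ^ ((1+m) ^ 4) - X 2 ^ (1+m) * X 0 ^ (1+m),
        X 1 ^ (1+m) - X 2 ^ (1+m) * X 0,
        X 0 ^ (1+m+1) - X 0 * X 2 ^ s + X 1 * X 2 ^ (1+m)} :=
    Ideal.subset_span (by simp)
  have g2 : (X 1 ^ (1+m) - X 2 ^ (1+m) * X 0 : MvPowerSeries (Fin 3) k) ∈
      Ideal.span {X 2 ^ ((1+m) ^ 4) - X 2 ^ (1+m) * X 0 ^ (1+m),
        X 1 ^ (1+m) - X 2 ^ (1+m) * X 0,
        X 0 ^ (1+m+1) - X 0 * X 2 ^ s + X 1 * X 2 ^ (1+m)} :=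
    Ideal.subset_span (by simp)
  have g3 : (X 0 ^ (1+m+1) - X 0 * X 2 ^ s + X 1 * X 2 ^ (1+m) : MvPowerSeries (Fin 3) k) ∈
      Ideal.span {X 2 ^ ((1+m) ^ 4) - X 2 ^ (1+m) * X 0 ^ (1+m),
        X 1 ^ (1+m) - X 2 ^ (1+m) * X 0,
        X 0 ^ (1+m+1) - X 0 * X 2 ^ s + X 1 * X 2 ^ (1+m)} :=
    Ideal.subset_span (by simp)
  have key : (X 0 * X 2 ^ (3 * (1 + m)) : MvPowerSeries (Fin 3) k) =
      X 1 ^ m * X 0 * (X 2 ^ ((1+m) ^ 4) - X 2 ^ (1+m) * X 0 ^ (1+m))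
      + X 1 ^ m * X 2 ^ (1+m) * (X 0 ^ (1+m+1) - X 0 * X 2 ^ s + X 1 * X 2 ^ (1+m))
      - X 2 ^ (2 * (1+m)) * (X 1 ^ (1+m) - X 2 ^ (1+m) * X 0) := by
    rw [hs]; ring
  rw [key]
  exact sub_mem (add_mem (Ideal.mul_mem_left _ _ g1) (Ideal.mul_mem_left _ _ g3))
    (Ideal.mul_mem_left _ _ g2)
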